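/- No output-oblivious CRC stably computes f(x1, x2) = max(x1, x2). -/
import Mathlib


/-- A flux vector `u` is applicable at state `c` if every reaction with positive
flux has all of its reactants present (positive concentration) in `c`. -/
def Applicable {σ ρ : Type} (react : ρ → σ → ℕ) (u : ρ → ℝ) (c : σ → ℝ) : Prop :=
  ∀ r, 0 < u r → ∀ s, 0 < react r s → 0 < c s

/-- Net change of species `s` caused by applying flux vector `u`
(the stoichiometry matrix applied to `u`). -/
noncomputable def StoichAct {σ ρ : Type} [Fintype ρ] (react prod : ρ → σ → ℕ)
    (u : ρ → ℝ) (s : σ) : ℝ :=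
  ∑ r, u r * ((prod r s : ℝ) - (react r s : ℝ))

/-- State `d` is straight-line reachable from `c` via flux vector `u`. -/
def SLReach {σ ρ : Type} [Fintype ρ] (react prod : ρ → σ → ℕ)
    (u : ρ → ℝ) (c d : σ → ℝ) : Prop :=
  (∀ r, 0 ≤ u r) ∧ Applicable react u c ∧ (∀ s, 0 ≤ d s) ∧
    ∀ s, d s = c s + StoichAct react prod u s

/-- Flux vector `u` consumes species `s`. -/
def Consumes {σ ρ : Type} (react : ρ → σ → ℕ) (u : ρ → ℝ) (s : σ) : Prop :=
  ∃ r, 0 < u r ∧ 0 < react r s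

/-- Flux vector `u` produces species `s`. -/
def Produces {σ ρ : Type} (prod : ρ → σ → ℕ) (u : ρ → ℝ) (s : σ) : Prop :=
  ∃ r, 0 < u r ∧ 0 < prod r s

/-- `u1` is independent of `u2`: `u1` consumes no species produced or consumed by `u2`. -/
def Independent {σ ρ : Type} (react prod : ρ → σ → ℕ) (u1 u2 : ρ → ℝ) : Prop :=
  ∀ s, Consumes react u1 s → ¬ Consumes react u2 s ∧ ¬ Produces prod u2 s

/-- Reachability: a finite sequence of straight-line segments. -/
def Reach {σ ρ : Type} [Fintype ρ] (react prod : ρ → σ → ℕ) (c d : σ → ℝ) : Prop :=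
  Relation.ReflTransGen (fun x y => ∃ u, SLReach react prod u x y) c d

open Classical in
/-- Initial state encoding input `x` on the input species `X i`, all other species 0. -/
noncomputable def InitState {σ : Type} {n : ℕ} (X : Fin n → σ) (x : Fin n → ℝ) : σ → ℝ :=
  fun s => ∑ i, if X i = s then x i else 0

/-- A state `o` is output stable if no reachable state changes the output concentration. -/
def OutputStable {σ ρ : Type} [Fintype ρ] (react prod : ρ → σ → ℕ) (Y : σ)
    (o : σ → ℝ) : Prop :=
  ∀ o', Reach react prod o o' → o' Y = o Y

/-- The CRC with input species `X`, output species `Y` stably computes `f`: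
from every state reachable from an input state, an output stable state with
output concentration `f x` is reachable. -/
def StablyComputes {σ ρ : Type} [Fintype ρ] {n : ℕ} (react prod : ρ → σ → ℕ)
    (X : Fin n → σ) (Y : σ) (f : (Fin n → ℝ) → ℝ) : Prop :=
  ∀ x : Fin n → ℝ, (∀ i, 0 ≤ x i) →
    ∀ c, Reach react prod (InitState X x) c →
      ∃ o, Reach react prod c o ∧ OutputStable react prod Y o ∧ o Y = f x

lemma reach_nonneg {σ ρ : Type} [Fintype ρ] {react prod : ρ → σ → ℕ} {c d : σ → ℝ}
    (h : Reach react prod c d) (hc : ∀ s, 0 ≤ c s) : ∀ s, 0 ≤ d s := by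
  induction h with
  | refl => exact hc
  | tail _ h2 ih => obtain ⟨u, hu⟩ := h2; exact hu.2.2.1

lemma reach_Y_mono {σ ρ : Type} [Fintype ρ] {react prod : ρ → σ → ℕ} {Y : σ}
    (hob : ∀ r, react r Y = 0) {c d : σ → ℝ}
    (h : Reach react prod c d) : c Y ≤ d Y := by
  induction h with
  | refl => exact le_rfl
  | tail _ h2 ih =>
    obtain ⟨u, hu⟩ := h2
    refine le_trans ih ?_
    rw [hu.2.2.2 Y]
    have : 0 ≤ StoichAct react prod u Y := by
      apply Finset.sum_nonneg
      intro r _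
      have := hu.1 r
      have h0 : ((react r Y : ℝ)) = 0 := by rw [hob r]; norm_num
      rw [h0, sub_zero]
      positivity
    linarith

lemma reach_add {σ ρ : Type} [Fintype ρ] {react prod : ρ → σ → ℕ} {c d : σ → ℝ}
    (e : σ → ℝ) (he : ∀ s, 0 ≤ e s) (h : Reach react prod c d) :
    Reach react prod (fun s => c s + e s) (fun s => d s + e s) := by
  induction h with
  | refl => exact Relation.ReflTransGen.refl
  | tail _ h2 ih =>
    obtain ⟨u, hu⟩ := h2
    refine Relation.ReflTransGen.tail ih ⟨u, hu.1, ?_, ?_, ?_⟩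
    · intro r hr s hs
      exact add_pos_of_pos_of_nonneg (hu.2.1 r hr s hs) (he s)
    · intro s; exact add_nonneg (hu.2.2.1 s) (he s)
    · intro s; have := hu.2.2.2 s; dsimp only; linarith

/-- No output-oblivious CRC stably computes `max`. -/
theorem no_output_oblivious_max (σ ρ : Type) [Fintype ρ]
    (react prod : ρ → σ → ℕ) (X : Fin 2 → σ) (hX : Function.Injective X)
    (Y : σ) (hY : Y ∉ Set.range X)
    (hob : ∀ r, react r Y = 0) :
    ¬ StablyComputes react prod X Y (fun x => max (x 0) (x 1)) := by
  intro hS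
  set A : σ → ℝ := InitState X ![1, 0] with hA
  set B : σ → ℝ := InitState X ![0, 1] with hB
  have hAnn : ∀ s, 0 ≤ A s := by
    intro s; apply Finset.sum_nonneg; intro i _
    split <;> [skip; rfl]
    fin_cases i <;> norm_num
  have hBnn : ∀ s, 0 ≤ B s := by
    intro s; apply Finset.sum_nonneg; intro i _
    split <;> [skip; rfl]
    fin_cases i <;> norm_num
  obtain ⟨o1, h1, _, hY1⟩ := hS ![1, 0] (by intro i; fin_cases i <;> norm_num)
    A Relation.ReflTransGen.refl
  obtain ⟨o2, h2, _, hY2⟩ := hS ![0, 1] (by intro i; fin_cases i <;> norm_num)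
    B Relation.ReflTransGen.refl
  have hY1' : o1 Y = 1 := by simpa using hY1
  have hY2' : o2 Y = 1 := by simpa using hY2
  have hBY : B Y = 0 := by
    rw [hB]; unfold InitState
    apply Finset.sum_eq_zero; intro i _
    rw [if_neg]; intro h; exact hY ⟨i, h⟩
  have ho1nn : ∀ s, 0 ≤ o1 s := reach_nonneg h1 hAnn
  -- combined trajectory from InitState X ![1,1]
  have hsum : ∀ s, InitState X ![1, 1] s = A s + B s := by
    intro s
    simp [InitState, hA, hB, Fin.sum_univ_two]
  have step1 : Reach react prod (InitState X ![1, 1]) (fun s => o1 s + B s) := by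
    have := reach_add B hBnn h1
    convert this using 1
    funext s; exact hsum s
  have step2 : Reach react prod (fun s => o1 s + B s) (fun s => o1 s + o2 s) := by
    have := reach_add o1 ho1nn h2
    have e1 : (fun s => o1 s + B s) = fun s => B s + o1 s := funext fun s => add_comm _ _
    have e2 : (fun s => o1 s + o2 s) = fun s => o2 s + o1 s := funext fun s => add_comm _ _
    rw [e1, e2]; exact this
  have hreach : Reach react prod (InitState X ![1, 1]) (fun s => o1 s + o2 s) :=
    step1.trans step2
  obtain ⟨o, ho, _, hoY⟩ := hS ![1, 1] (by intro i; fin_cases i <;> norm_num)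
    (fun s => o1 s + o2 s) hreach
  have hmono : (fun s => o1 s + o2 s) Y ≤ o Y := reach_Y_mono hob ho
  simp only [hY1', hY2'] at hmono
  have : o Y = 1 := by simpa using hoY
  norm_num [this] at hmono
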